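/- arXiv:1704.00587 — 2 statements merged into one kernel-verified Lean document; each statement's English description precedes it below -/
import Mathlib

section
/- (Appendix B, term (c).) On a probability space, let x₀ be a square-integrable ℝ^n-valued random vector and (η_l)_{l≥1} ℝ^n-valued square-integrable random vectors with E[η_l] = 0 and Cov(η_l) = I_n, with x₀, η₁, η₂, … mutually independent. Let A, β be deterministic n×n real matrices, (u_l)_{l≥1} deterministic vectors in ℝ^n, and define x_s = u_s + A x_{s−1} + β η_s for s ≥ 1. Let 0 ≤ h < t and let M_1, …, M_t and N_1, …, N_{t−h} be deterministic n×n real matrices. Then Cov(Σ_{l=1}^{t} M_l η_l, Σ_{k=1}^{t−h} N_k x_{k−1}) = Σ_{l=1}^{t−h} M_l (Σ_{k=l+1}^{t−h} N_k A^{k−1−l} β)ᵀ, where inner empty sums are zero. -/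
open Matrix MeasureTheory ProbabilityTheory

namespace CovAux

variable {Ω : Type*} [MeasureSpace Ω] [IsProbabilityMeasure (ℙ : Measure Ω)]

/-- Scalar covariance of two real random variables. -/
noncomputable def covR (f g : Ω → ℝ) : ℝ :=
  ∫ ω, (f ω - ∫ ω', f ω') * (g ω - ∫ ω', g ω')

omit [IsProbabilityMeasure (ℙ : Measure Ω)] in
lemma integrable_mul2 {f g : Ω → ℝ} (hf : MemLp f 2 ℙ) (hg : MemLp g 2 ℙ) :
    Integrable (fun ω => f ω * g ω) ℙ :=
  memLp_one_iff_integrable.mp (hg.smul hf)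

omit [IsProbabilityMeasure (ℙ : Measure Ω)] in
lemma memℒp_apply {n : ℕ} {X : Ω → Fin n → ℝ} (h : MemLp X 2 ℙ) (i : Fin n) :
    MemLp (fun ω => X ω i) 2 ℙ :=
  (ContinuousLinearMap.proj (R := ℝ) (φ := fun _ : Fin n => ℝ) i).comp_memLp' h

lemma covR_eq_zero {f g : Ω → ℝ} (h : IndepFun f g ℙ) (hf : Integrable f ℙ)
    (hg : Integrable g ℙ) : covR f g = 0 := by
  have h' : IndepFun (fun ω => f ω - ∫ ω', f ω') (fun ω => g ω - ∫ ω', g ω') ℙ :=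
    h.comp (measurable_id.sub_const _) (measurable_id.sub_const _)
  have hfi : Integrable (fun ω => f ω - ∫ ω', f ω') ℙ := hf.sub (integrable_const _)
  have hgi : Integrable (fun ω => g ω - ∫ ω', g ω') ℙ := hg.sub (integrable_const _)
  have h2 : (∫ ω, (f ω - ∫ ω', f ω') * (g ω - ∫ ω', g ω'))
      = (∫ ω, (f ω - ∫ ω', f ω')) * ∫ ω, (g ω - ∫ ω', g ω') :=
    h'.integral_fun_mul_eq_mul_integral hfi.1 hgi.1
  rw [covR, h2, integral_sub hf (integrable_const _), integral_const]
  simp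

lemma covR_sum {ι : Type*} (s₁ s₂ : Finset ι) (g : ι → Ω → ℝ)
    (hg : ∀ v, MemLp (g v) 2 ℙ) (a b : ι → ℝ) (c₁ c₂ : ℝ) :
    covR (fun ω => c₁ + ∑ v ∈ s₁, a v * g v ω) (fun ω => c₂ + ∑ w ∈ s₂, b w * g w ω)
      = ∑ v ∈ s₁, ∑ w ∈ s₂, a v * b w * covR (g v) (g w) := by
  have hgi : ∀ v, Integrable (g v) ℙ := fun v => (hg v).integrable one_le_two
  have hmean : ∀ (c : ℝ) (s : Finset ι) (d : ι → ℝ),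
      (∫ ω, (c + ∑ v ∈ s, d v * g v ω)) = c + ∑ v ∈ s, d v * ∫ ω, g v ω := by
    intro c s d
    rw [integral_add (integrable_const c)
      (integrable_finset_sum _ fun v _ => (hgi v).const_mul _), integral_const,
      integral_finset_sum _ fun v _ => (hgi v).const_mul _]
    simp [integral_const_mul]
  set m : ι → ℝ := fun v => ∫ ω, g v ω with hm
  have hcent : ∀ v, MemLp (fun ω => g v ω - m v) 2 ℙ := fun v => (hg v).sub (memLp_const _)
  have key : covR (fun ω => c₁ + ∑ v ∈ s₁, a v * g v ω)
      (fun ω => c₂ + ∑ w ∈ s₂, b w * g w ω)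
      = ∫ ω, ∑ v ∈ s₁, ∑ w ∈ s₂, a v * b w * ((g v ω - m v) * (g w ω - m w)) := by
    rw [covR, hmean, hmean]
    congr 1
    funext ω
    rw [add_sub_add_left_eq_sub, add_sub_add_left_eq_sub, ← Finset.sum_sub_distrib,
      ← Finset.sum_sub_distrib, Finset.sum_mul_sum]
    refine Finset.sum_congr rfl fun v _ => Finset.sum_congr rfl fun w _ => ?_
    rw [← mul_sub, ← mul_sub]
    ring
  rw [key, integral_finset_sum _ fun v _ => integrable_finset_sum _ fun w _ =>
    ((integrable_mul2 (hcent v) (hcent w)).const_mul _)]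
  refine Finset.sum_congr rfl fun v _ => ?_
  rw [integral_finset_sum _ fun w _ => ((integrable_mul2 (hcent v) (hcent w)).const_mul _)]
  refine Finset.sum_congr rfl fun w _ => ?_
  rw [integral_const_mul]
  rfl

end CovAux

/-- The `a × b` covariance matrix `Cov(X, Y) = E[(X − E X)(Y − E Y)ᵀ]` of two
square-integrable random vectors. -/
noncomputable def covMatrix {Ω : Type*} [MeasureSpace Ω] {a b : ℕ}
    (X : Ω → Fin a → ℝ) (Y : Ω → Fin b → ℝ) : Matrix (Fin a) (Fin b) ℝ :=
  Matrix.of fun i j => ∫ ω, (X ω i - ∫ ω', X ω' i) * (Y ω j - ∫ ω', Y ω' j)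

/-- Appendix B, term (c):
`Cov(Σ_{l=1}^t M_l η_l, Σ_{k=1}^{t-h} N_k x_{k-1}) = Σ_{l=1}^{t-h} M_l (Σ_{k=l+1}^{t-h} N_k A^{k-1-l} β)ᵀ`. -/
theorem cov_noise_state_sums {Ω : Type*} [MeasureSpace Ω]
    [IsProbabilityMeasure (ℙ : Measure Ω)] {n : ℕ} {t h : ℕ} (hht : h < t)
    (x₀ : Ω → Fin n → ℝ) (η : ℕ → Ω → Fin n → ℝ)
    (hx₀L2 : MemLp x₀ 2 ℙ)
    (hηL2 : ∀ l : ℕ, 1 ≤ l → MemLp (η l) 2 ℙ)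
    (hηmean : ∀ l : ℕ, 1 ≤ l → ∀ i, (∫ ω, η l ω i) = 0)
    (hηcov : ∀ l : ℕ, 1 ≤ l → covMatrix (η l) (η l) = 1)
    -- x₀, η₁, η₂, … mutually independent
    (hindep : iIndepFun
      (fun l : ℕ => if l = 0 then x₀ else η l) ℙ)
    (A β : Matrix (Fin n) (Fin n) ℝ) (u : ℕ → Fin n → ℝ)
    (x : ℕ → Ω → Fin n → ℝ)
    (hx0 : x 0 = x₀)
    (hxrec : ∀ s : ℕ, ∀ ω, x (s + 1) ω = u (s + 1) + A *ᵥ x s ω + β *ᵥ η (s + 1) ω)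
    (M N : ℕ → Matrix (Fin n) (Fin n) ℝ) :
    covMatrix (fun ω => ∑ l ∈ Finset.Icc 1 t, M l *ᵥ η l ω)
        (fun ω => ∑ k ∈ Finset.Icc 1 (t - h), N k *ᵥ x (k - 1) ω) =
      ∑ l ∈ Finset.Icc 1 (t - h),
        M l * (∑ k ∈ Finset.Icc (l + 1) (t - h), N k * A ^ (k - 1 - l) * β)ᵀ := by
  classical
  set K := t - h with hKdef
  have hK : 1 ≤ K := by omega
  have hKt : K ≤ t := by omega
  -- `mulVec` commutes with finite sums of vectors
  have mulVec_sum : ∀ {ι : Type} (s : Finset ι) (C : Matrix (Fin n) (Fin n) ℝ)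
      (v : ι → Fin n → ℝ), C *ᵥ (∑ i ∈ s, v i) = ∑ i ∈ s, C *ᵥ v i := by
    intro ι s C v
    funext j
    simp only [Matrix.mulVec, dotProduct, Finset.sum_apply, Finset.mul_sum]
    exact Finset.sum_comm
  -- explicit solution of the recursion
  have hxexp : ∀ m, ∀ ω, x m ω = (∑ s ∈ Finset.Icc 1 m, A ^ (m - s) *ᵥ u s)
      + A ^ m *ᵥ x₀ ω + ∑ s ∈ Finset.Icc 1 m, (A ^ (m - s) * β) *ᵥ η s ω := by
    intro m
    induction m with
    | zero => intro ω; simp [hx0]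
    | succ m ih =>
      intro ω
      rw [hxrec m ω, ih ω, Matrix.mulVec_add, Matrix.mulVec_add, Matrix.mulVec_mulVec,
        ← pow_succ', mulVec_sum, mulVec_sum,
        Finset.sum_Icc_succ_top (by omega : 1 ≤ m + 1),
        Finset.sum_Icc_succ_top (by omega : 1 ≤ m + 1)]
      simp only [Nat.sub_self, pow_zero, Matrix.one_mulVec, one_mul]
      have e1 : ∀ s ∈ Finset.Icc 1 m, A *ᵥ (A ^ (m - s) *ᵥ u s) = A ^ (m + 1 - s) *ᵥ u s := by
        intro s hs
        simp only [Finset.mem_Icc] at hs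
        rw [Matrix.mulVec_mulVec, ← pow_succ', show m - s + 1 = m + 1 - s by omega]
      have e2 : ∀ s ∈ Finset.Icc 1 m, A *ᵥ ((A ^ (m - s) * β) *ᵥ η s ω)
          = (A ^ (m + 1 - s) * β) *ᵥ η s ω := by
        intro s hs
        simp only [Finset.mem_Icc] at hs
        rw [Matrix.mulVec_mulVec, ← mul_assoc, ← pow_succ',
          show m - s + 1 = m + 1 - s by omega]
      rw [Finset.sum_congr rfl e1, Finset.sum_congr rfl e2]
      abel
  -- double-sum swap
  have hswap : ∀ (f : ℕ → ℕ → ℝ),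
      ∑ k ∈ Finset.Icc 1 K, ∑ s ∈ Finset.Icc 1 (k - 1), f k s
        = ∑ s ∈ Finset.Icc 1 (K - 1), ∑ k ∈ Finset.Icc (s + 1) K, f k s := by
    intro f
    have hIccIco : ∀ a b : ℕ, Finset.Icc a b = Finset.Ico a (b + 1) := by
      intro a b; ext c; simp [Nat.lt_succ_iff]
    have h1 : ∑ k ∈ Finset.Icc 1 K, ∑ s ∈ Finset.Icc 1 (k - 1), f k s
        = ∑ k ∈ Finset.Ico 1 (K + 1), ∑ s ∈ Finset.Ico 1 k, f k s := by
      rw [← hIccIco]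
      refine Finset.sum_congr rfl fun k hk => ?_
      simp only [Finset.mem_Icc] at hk
      congr 1
    have h3 : ∑ s ∈ Finset.Icc 1 (K - 1), ∑ k ∈ Finset.Icc (s + 1) K, f k s
        = ∑ s ∈ Finset.Ico 1 K, ∑ k ∈ Finset.Ico (s + 1) (K + 1), f k s := by
      refine Finset.sum_congr ?_ fun s hs => by rw [hIccIco]
      ext c; simp only [Finset.mem_Icc, Finset.mem_Ico]; omega
    rw [h1, ← Finset.sum_Ico_Ico_comm' 1 (K + 1) (fun s k => f k s), h3,
      Finset.sum_Ico_succ_top (by omega : 1 ≤ K)]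
    simp [Finset.Ico_self]
  -- the base random variables, indexed by (time, coordinate)
  set g : ℕ × Fin n → Ω → ℝ := fun v ω => (if v.1 = 0 then x₀ else η v.1) ω v.2 with hgdef
  have hgL2 : ∀ v, MemLp (g v) 2 ℙ := by
    rintro ⟨l, p⟩
    by_cases hl : l = 0
    · simpa [hgdef, hl] using CovAux.memℒp_apply hx₀L2 p
    · simpa [hgdef, hl] using CovAux.memℒp_apply (hηL2 l (by omega)) p
  have hgcov : ∀ v w : ℕ × Fin n, 1 ≤ v.1 →
      CovAux.covR (g v) (g w) = if w = v then 1 else 0 := by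
    rintro ⟨l, p⟩ ⟨m, q⟩ hl
    simp only at hl
    by_cases hlm : m = l
    · subst hlm
      have h1 : covMatrix (η m) (η m) = 1 := hηcov m hl
      have h2 : CovAux.covR (g (m, p)) (g (m, q)) = covMatrix (η m) (η m) p q := by
        simp only [hgdef, if_neg (show ¬ m = 0 by omega)]
        rfl
      rw [h2, h1, Matrix.one_apply]
      by_cases hpq : p = q
      · simp [hpq]
      · rw [if_neg hpq,
          if_neg (show ¬ ((m, q) = (m, p)) from fun hEq => hpq (congrArg Prod.snd hEq).symm)]
    · have hne : l ≠ m := fun hEq => hlm hEq.symm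
      have hind : IndepFun (g (l, p)) (g (m, q)) ℙ :=
        (hindep.indepFun hne).comp (measurable_pi_apply p) (measurable_pi_apply q)
      rw [CovAux.covR_eq_zero hind ((hgL2 (l, p)).integrable one_le_two)
        ((hgL2 (m, q)).integrable one_le_two),
        if_neg (show (m, q) ≠ (l, p) by intro hEq; exact hlm (congrArg Prod.fst hEq))]
  -- entrywise computation
  ext i j
  -- first argument as a linear combination of the base variables
  have hFrw : (fun ω => (∑ l ∈ Finset.Icc 1 t, M l *ᵥ η l ω) i)
      = fun ω => (0 : ℝ) + ∑ v ∈ Finset.Icc 1 t ×ˢ (Finset.univ : Finset (Fin n)),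
        M v.1 i v.2 * g v ω := by
    funext ω
    rw [zero_add, Finset.sum_product, Finset.sum_apply]
    refine Finset.sum_congr rfl fun l hl => ?_
    simp only [Finset.mem_Icc] at hl
    simp only [hgdef, if_neg (show ¬ l = 0 by omega)]
    simp [Matrix.mulVec, dotProduct]
  -- coefficient matrices for the second argument
  set C : ℕ → Matrix (Fin n) (Fin n) ℝ := fun s =>
    if s = 0 then ∑ k ∈ Finset.Icc 1 K, N k * A ^ (k - 1)
    else ∑ k ∈ Finset.Icc (s + 1) K, N k * A ^ (k - 1 - s) * β with hCdef
  set c₂ : ℝ := ∑ k ∈ Finset.Icc 1 K,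
    (N k *ᵥ (∑ s ∈ Finset.Icc 1 (k - 1), A ^ (k - 1 - s) *ᵥ u s)) j with hc₂def
  -- second argument as a linear combination of the base variables
  have hGrw : (fun ω => (∑ k ∈ Finset.Icc 1 K, N k *ᵥ x (k - 1) ω) j)
      = fun ω => c₂ + ∑ w ∈ Finset.Icc 0 (K - 1) ×ˢ (Finset.univ : Finset (Fin n)),
        (C w.1) j w.2 * g w ω := by
    funext ω
    rw [Finset.sum_apply]
    have step1 : ∀ k ∈ Finset.Icc 1 K, (N k *ᵥ x (k - 1) ω) j
        = (N k *ᵥ (∑ s ∈ Finset.Icc 1 (k - 1), A ^ (k - 1 - s) *ᵥ u s)) j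
          + (∑ q, (N k * A ^ (k - 1)) j q * g (0, q) ω)
          + ∑ s ∈ Finset.Icc 1 (k - 1), ∑ q, (N k * A ^ (k - 1 - s) * β) j q * g (s, q) ω := by
      intro k hk
      simp only [Finset.mem_Icc] at hk
      rw [hxexp (k - 1) ω, Matrix.mulVec_add, Matrix.mulVec_add]
      rw [Pi.add_apply, Pi.add_apply]
      congr 1
      congr 1
      · rw [Matrix.mulVec_mulVec]
        simp [Matrix.mulVec, dotProduct, hgdef]
      · rw [mulVec_sum, Finset.sum_apply]
        refine Finset.sum_congr rfl fun s hs => ?_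
        simp only [Finset.mem_Icc] at hs
        rw [Matrix.mulVec_mulVec, ← mul_assoc]
        simp only [hgdef, if_neg (show ¬ s = 0 by omega)]
        simp [Matrix.mulVec, dotProduct]
    have hC0 : C 0 = ∑ k ∈ Finset.Icc 1 K, N k * A ^ (k - 1) := by simp [hCdef]
    have hCs : ∀ s : ℕ, s ≠ 0 → C s = ∑ k ∈ Finset.Icc (s + 1) K, N k * A ^ (k - 1 - s) * β := by
      intro s hs; simp [hCdef, hs]
    rw [Finset.sum_congr rfl step1, Finset.sum_add_distrib, Finset.sum_add_distrib, ← hc₂def]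
    have t2 : ∑ k ∈ Finset.Icc 1 K, ∑ q, (N k * A ^ (k - 1)) j q * g (0, q) ω
        = ∑ q, (C 0) j q * g (0, q) ω := by
      rw [Finset.sum_comm]
      refine Finset.sum_congr rfl fun q _ => ?_
      rw [hC0, Matrix.sum_apply, Finset.sum_mul]
    have t3 : ∑ k ∈ Finset.Icc 1 K, ∑ s ∈ Finset.Icc 1 (k - 1),
          ∑ q, (N k * A ^ (k - 1 - s) * β) j q * g (s, q) ω
        = ∑ s ∈ Finset.Icc 1 (K - 1), ∑ q, (C s) j q * g (s, q) ω := by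
      rw [hswap (fun k s => ∑ q, (N k * A ^ (k - 1 - s) * β) j q * g (s, q) ω)]
      refine Finset.sum_congr rfl fun s hs => ?_
      simp only [Finset.mem_Icc] at hs
      rw [Finset.sum_comm]
      refine Finset.sum_congr rfl fun q _ => ?_
      rw [hCs s (by omega), Matrix.sum_apply, Finset.sum_mul]
    rw [t2, t3, Finset.sum_product]
    have hsplit : Finset.Icc 0 (K - 1) = insert 0 (Finset.Icc 1 (K - 1)) := by
      ext c; simp only [Finset.mem_Icc, Finset.mem_insert]; omega
    rw [hsplit, Finset.sum_insert (by simp)]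
    ring
  have hLHS : covMatrix (fun ω => ∑ l ∈ Finset.Icc 1 t, M l *ᵥ η l ω)
      (fun ω => ∑ k ∈ Finset.Icc 1 K, N k *ᵥ x (k - 1) ω) i j
      = CovAux.covR (fun ω => (∑ l ∈ Finset.Icc 1 t, M l *ᵥ η l ω) i)
        (fun ω => (∑ k ∈ Finset.Icc 1 K, N k *ᵥ x (k - 1) ω) j) := rfl
  rw [hLHS, hFrw, hGrw,
    CovAux.covR_sum (Finset.Icc 1 t ×ˢ Finset.univ) (Finset.Icc 0 (K - 1) ×ˢ Finset.univ)
      g hgL2 (fun v => M v.1 i v.2) (fun w => (C w.1) j w.2) 0 c₂]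
  have hterm : ∀ v ∈ Finset.Icc 1 t ×ˢ (Finset.univ : Finset (Fin n)),
      (∑ w ∈ Finset.Icc 0 (K - 1) ×ˢ (Finset.univ : Finset (Fin n)),
        M v.1 i v.2 * ((C w.1) j w.2) * CovAux.covR (g v) (g w))
      = if v ∈ Finset.Icc 0 (K - 1) ×ˢ (Finset.univ : Finset (Fin n))
          then M v.1 i v.2 * (C v.1) j v.2 else 0 := by
    intro v hv
    have hv1 : 1 ≤ v.1 := by
      rcases Finset.mem_product.mp hv with ⟨h1, _⟩
      exact (Finset.mem_Icc.mp h1).1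
    have : ∀ w ∈ Finset.Icc 0 (K - 1) ×ˢ (Finset.univ : Finset (Fin n)),
        M v.1 i v.2 * ((C w.1) j w.2) * CovAux.covR (g v) (g w)
        = if w = v then M v.1 i v.2 * (C w.1) j w.2 else 0 := by
      intro w _
      rw [hgcov v w hv1]
      by_cases hw : w = v <;> simp [hw]
    rw [Finset.sum_congr rfl this]
    rw [Finset.sum_ite_eq' (Finset.Icc 0 (K - 1) ×ˢ Finset.univ) v
      (fun w => M v.1 i v.2 * (C w.1) j w.2)]
  rw [Finset.sum_congr rfl hterm, Finset.sum_ite_mem]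
  have hinter : (Finset.Icc 1 t ×ˢ (Finset.univ : Finset (Fin n)))
      ∩ (Finset.Icc 0 (K - 1) ×ˢ Finset.univ) = Finset.Icc 1 (K - 1) ×ˢ Finset.univ := by
    ext ⟨l, p⟩
    simp only [Finset.mem_inter, Finset.mem_product, Finset.mem_Icc, Finset.mem_univ,
      and_true]
    omega
  rw [hinter, Finset.sum_product]
  -- now identify with the right-hand side
  rw [Matrix.sum_apply]
  have hzero : ∀ l ∈ Finset.Icc 1 K, l ∉ Finset.Icc 1 (K - 1) →
      (M l * (∑ k ∈ Finset.Icc (l + 1) K, N k * A ^ (k - 1 - l) * β)ᵀ) i j = 0 := by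
    intro l hl hl'
    simp only [Finset.mem_Icc] at hl hl'
    rw [Finset.Icc_eq_empty (by omega : ¬ l + 1 ≤ K)]
    simp
  rw [← Finset.sum_subset (Finset.Icc_subset_Icc_right (by omega : K - 1 ≤ K)) hzero]
  refine Finset.sum_congr rfl fun l hl => ?_
  simp only [Finset.mem_Icc] at hl
  rw [Matrix.mul_apply]
  refine Finset.sum_congr rfl fun p _ => ?_
  have hCs : ∀ s : ℕ, s ≠ 0 → C s = ∑ k ∈ Finset.Icc (s + 1) K, N k * A ^ (k - 1 - s) * β := by
    intro s hs; simp [hCdef, hs]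
  rw [hCs l (by omega), Matrix.transpose_apply]
end

section
/- (Appendix B, term (e).) On a probability space, let x₀ be a square-integrable ℝ^n-valued random vector and (η_l)_{l≥1} ℝ^n-valued square-integrable random vectors with E[η_l] = 0 and Cov(η_l) = I_n, with x₀, η₁, η₂, … mutually independent. Let A, β be deterministic n×n real matrices, (u_l)_{l≥1} deterministic vectors in ℝ^n, and define x_s = u_s + A x_{s−1} + β η_s for s ≥ 1. Let 0 ≤ h < t and let M_1, …, M_t and N_1, …, N_{t−h} be deterministic n×n real matrices. Then Cov(Σ_{l=1}^{t} M_l x_{l−1}, Σ_{k=1}^{t−h} N_k η_k) = Σ_{k=1}^{t−h} (Σ_{l=k+1}^{t} M_l A^{l−1−k} β) N_kᵀ, where inner empty sums are zero. -/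
open Matrix MeasureTheory ProbabilityTheory

section CovFn

variable {Ω : Type*} [MeasureSpace Ω] [IsProbabilityMeasure (ℙ : Measure Ω)]

/-- Scalar covariance of two real random variables. -/
noncomputable def covFn (f g : Ω → ℝ) : ℝ :=
  ∫ ω, (f ω - ∫ ω', f ω') * (g ω - ∫ ω', g ω')

lemma memLp2_integrable_mul {f g : Ω → ℝ} (hf : MemLp f 2 ℙ) (hg : MemLp g 2 ℙ) :
    Integrable (fun ω => f ω * g ω) ℙ := by
  refine Integrable.mono' ((hf.integrable_sq.add hg.integrable_sq).div_const 2)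
    (hf.1.mul hg.1) (Filter.Eventually.of_forall fun ω => ?_)
  simp only [Pi.add_apply, Real.norm_eq_abs, abs_mul]
  nlinarith [sq_nonneg (|f ω| - |g ω|), abs_nonneg (f ω), abs_nonneg (g ω),
    sq_abs (f ω), sq_abs (g ω)]

lemma covFn_eq {f g : Ω → ℝ} (hf : MemLp f 2 ℙ) (hg : MemLp g 2 ℙ) :
    covFn f g = (∫ ω, f ω * g ω) - (∫ ω, f ω) * ∫ ω, g ω := by
  have hfi := hf.integrable one_le_two
  have hgi := hg.integrable one_le_two
  have hfg := memLp2_integrable_mul hf hg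
  set a := ∫ ω, f ω with ha
  set b := ∫ ω, g ω with hb
  have hexp : ∀ ω, (f ω - a) * (g ω - b) = f ω * g ω - a * g ω - b * f ω + a * b :=
    fun ω => by ring
  have h1 : Integrable (fun ω => f ω * g ω - a * g ω) ℙ := hfg.sub (hgi.const_mul a)
  have h2 : Integrable (fun ω => f ω * g ω - a * g ω - b * f ω) ℙ := h1.sub (hfi.const_mul b)
  rw [covFn]
  simp_rw [← ha, ← hb, hexp]
  rw [integral_add h2 (integrable_const _), integral_sub h1 (hfi.const_mul b),
    integral_sub hfg (hgi.const_mul a), integral_const_mul, integral_const_mul, integral_const]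
  simp only [probReal_univ, one_smul]
  ring

lemma covFn_comm (f g : Ω → ℝ) : covFn f g = covFn g f := by
  simp only [covFn]
  exact integral_congr_ae (Filter.Eventually.of_forall fun ω => mul_comm _ _)

lemma covFn_indep {f g : Ω → ℝ} (hf : MemLp f 2 ℙ) (hg : MemLp g 2 ℙ)
    (h : IndepFun f g ℙ) : covFn f g = 0 := by
  have hmul := h.integral_fun_mul_eq_mul_integral hf.1 hg.1
  have hmul' : (∫ ω, f ω * g ω) = (∫ ω, f ω) * ∫ ω, g ω := hmul
  rw [covFn_eq hf hg, hmul']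
  ring

lemma covFn_add_left {f₁ f₂ g : Ω → ℝ} (hf₁ : MemLp f₁ 2 ℙ) (hf₂ : MemLp f₂ 2 ℙ)
    (hg : MemLp g 2 ℙ) :
    covFn (fun ω => f₁ ω + f₂ ω) g = covFn f₁ g + covFn f₂ g := by
  rw [covFn_eq (show MemLp (fun ω => f₁ ω + f₂ ω) 2 ℙ from hf₁.add hf₂) hg,
    covFn_eq hf₁ hg, covFn_eq hf₂ hg]
  simp_rw [add_mul]
  rw [integral_add (memLp2_integrable_mul hf₁ hg) (memLp2_integrable_mul hf₂ hg),
    integral_add (hf₁.integrable one_le_two) (hf₂.integrable one_le_two)]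
  ring

lemma covFn_const_mul_left (c : ℝ) {f g : Ω → ℝ} (hf : MemLp f 2 ℙ) (hg : MemLp g 2 ℙ) :
    covFn (fun ω => c * f ω) g = c * covFn f g := by
  rw [covFn_eq (hf.const_mul c) hg, covFn_eq hf hg]
  simp_rw [mul_assoc]
  rw [integral_const_mul, integral_const_mul]
  ring

lemma covFn_const_add_left (c : ℝ) {f g : Ω → ℝ} (hf : MemLp f 2 ℙ) :
    covFn (fun ω => c + f ω) g = covFn f g := by
  have hfi := hf.integrable one_le_two
  have hint : (∫ ω', (c + f ω')) = c + ∫ ω', f ω' := by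
    rw [integral_add (integrable_const _) hfi, integral_const]
    simp
  simp only [covFn, hint]
  exact integral_congr_ae (Filter.Eventually.of_forall fun ω => by ring)

lemma covFn_sum_left {ι : Type*} (s : Finset ι) (f : ι → Ω → ℝ) {g : Ω → ℝ}
    (hf : ∀ l ∈ s, MemLp (f l) 2 ℙ) (hg : MemLp g 2 ℙ) :
    covFn (fun ω => ∑ l ∈ s, f l ω) g = ∑ l ∈ s, covFn (f l) g := by
  classical
  induction s using Finset.cons_induction with
  | empty => simp [covFn]
  | cons a s ha ih =>
    simp_rw [Finset.sum_cons]
    rw [covFn_add_left (hf a (Finset.mem_cons_self a s))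
      (memLp_finset_sum s fun l hl => hf l (Finset.mem_cons_of_mem hl)) hg,
      ih fun l hl => hf l (Finset.mem_cons_of_mem hl)]

lemma covFn_sum_mul_sum_mul {ι κ : Type*} (s : Finset ι) (u : Finset κ)
    (a : ι → ℝ) (f : ι → Ω → ℝ) (b : κ → ℝ) (g : κ → Ω → ℝ)
    (hf : ∀ l ∈ s, MemLp (f l) 2 ℙ) (hg : ∀ k ∈ u, MemLp (g k) 2 ℙ) :
    covFn (fun ω => ∑ l ∈ s, a l * f l ω) (fun ω => ∑ k ∈ u, b k * g k ω)
      = ∑ l ∈ s, ∑ k ∈ u, a l * b k * covFn (f l) (g k) := by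
  have hG : MemLp (fun ω => ∑ k ∈ u, b k * g k ω) 2 ℙ :=
    memLp_finset_sum u fun k hk => (hg k hk).const_mul _
  rw [covFn_sum_left s _ (fun l hl => (hf l hl).const_mul _) hG]
  refine Finset.sum_congr rfl fun l hl => ?_
  rw [covFn_const_mul_left _ (hf l hl) hG, covFn_comm,
    covFn_sum_left u _ (fun k hk => (hg k hk).const_mul _) (hf l hl), Finset.mul_sum]
  refine Finset.sum_congr rfl fun k hk => ?_
  rw [covFn_const_mul_left _ (hg k hk) (hf l hl), covFn_comm]
  ring

end CovFn

/-- Appendix B, term (e):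
`Cov(Σ_{l=1}^t M_l x_{l-1}, Σ_{k=1}^{t-h} N_k η_k) = Σ_{k=1}^{t-h} (Σ_{l=k+1}^t M_l A^{l-1-k} β) N_kᵀ`. -/
theorem cov_state_noise_sums {Ω : Type*} [MeasureSpace Ω]
    [IsProbabilityMeasure (ℙ : Measure Ω)] {n : ℕ} {t h : ℕ} (hht : h < t)
    (x₀ : Ω → Fin n → ℝ) (η : ℕ → Ω → Fin n → ℝ)
    (hx₀L2 : MemLp x₀ 2 ℙ)
    (hηL2 : ∀ l : ℕ, 1 ≤ l → MemLp (η l) 2 ℙ)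
    (hηmean : ∀ l : ℕ, 1 ≤ l → ∀ i, (∫ ω, η l ω i) = 0)
    (hηcov : ∀ l : ℕ, 1 ≤ l → covMatrix (η l) (η l) = 1)
    -- x₀, η₁, η₂, … mutually independent
    (hindep : iIndepFun
      (fun l : ℕ => if l = 0 then x₀ else η l) ℙ)
    (A β : Matrix (Fin n) (Fin n) ℝ) (u : ℕ → Fin n → ℝ)
    (x : ℕ → Ω → Fin n → ℝ)
    (hx0 : x 0 = x₀)
    (hxrec : ∀ s : ℕ, ∀ ω, x (s + 1) ω = u (s + 1) + A *ᵥ x s ω + β *ᵥ η (s + 1) ω)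
    (M N : ℕ → Matrix (Fin n) (Fin n) ℝ) :
    covMatrix (fun ω => ∑ l ∈ Finset.Icc 1 t, M l *ᵥ x (l - 1) ω)
        (fun ω => ∑ k ∈ Finset.Icc 1 (t - h), N k *ᵥ η k ω) =
      ∑ k ∈ Finset.Icc 1 (t - h),
        (∑ l ∈ Finset.Icc (k + 1) t, M l * A ^ (l - 1 - k) * β) * (N k)ᵀ := by
  classical
  -- component square-integrability
  have hcomp : ∀ {X : Ω → Fin n → ℝ}, MemLp X 2 ℙ → ∀ i, MemLp (fun ω => X ω i) 2 ℙ := by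
    intro X hX i
    exact hX.of_le ((continuous_apply i).comp_aestronglyMeasurable hX.1)
      (Filter.Eventually.of_forall fun ω => norm_le_pi_norm (X ω) i)
  have hηp : ∀ k : ℕ, 1 ≤ k → ∀ q, MemLp (fun ω => η k ω q) 2 ℙ :=
    fun k hk q => hcomp (hηL2 k hk) q
  have hxL2 : ∀ s, ∀ p, MemLp (fun ω => x s ω p) 2 ℙ := by
    intro s
    induction s with
    | zero => intro p; rw [hx0]; exact hcomp hx₀L2 p
    | succ s ih =>
      intro p
      have hfun : (fun ω => x (s + 1) ω p)
          = fun ω => (u (s + 1) p + ∑ r, A p r * x s ω r) + ∑ r, β p r * η (s + 1) ω r := by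
        ext ω
        rw [hxrec s ω]
        simp [Matrix.mulVec, dotProduct]
      rw [hfun]
      have h1 : MemLp (fun ω => ∑ r, A p r * x s ω r) 2 ℙ :=
        memLp_finset_sum _ fun r _ => (ih r).const_mul _
      have h2 : MemLp (fun ω => ∑ r, β p r * η (s + 1) ω r) 2 ℙ :=
        memLp_finset_sum _ fun r _ => (hηp (s + 1) (by omega) r).const_mul _
      exact (((memLp_const (u (s + 1) p)).add h1).add h2)
  -- independence of components
  have hx0indep : ∀ k : ℕ, 1 ≤ k → ∀ p q,
      IndepFun (fun ω => x₀ ω p) (fun ω => η k ω q) ℙ := by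
    intro k hk p q
    have hne : (0 : ℕ) ≠ k := by omega
    have h := hindep.indepFun hne
    rw [if_pos rfl, if_neg (by omega : ¬ k = 0)] at h
    exact h.comp (measurable_pi_apply p) (measurable_pi_apply q)
  have hηindep : ∀ a b : ℕ, 1 ≤ a → 1 ≤ b → a ≠ b → ∀ r q,
      IndepFun (fun ω => η a ω r) (fun ω => η b ω q) ℙ := by
    intro a b ha hb hab r q
    have h := hindep.indepFun hab
    rw [if_neg (by omega : ¬ a = 0), if_neg (by omega : ¬ b = 0)] at h
    exact h.comp (measurable_pi_apply r) (measurable_pi_apply q)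
  -- covariance entries of η
  have hηcov' : ∀ k, 1 ≤ k → ∀ r q,
      covFn (fun ω => η k ω r) (fun ω => η k ω q) = if r = q then 1 else 0 := by
    intro k hk r q
    have h2 : covMatrix (η k) (η k) r q = (1 : Matrix (Fin n) (Fin n) ℝ) r q := by
      rw [hηcov k hk]
    rw [Matrix.one_apply] at h2
    exact h2
  -- the key covariance computation
  have key : ∀ s k, 1 ≤ k → ∀ p q,
      covFn (fun ω => x s ω p) (fun ω => η k ω q)
        = if k ≤ s then (A ^ (s - k) * β) p q else 0 := by
    intro s
    induction s with
    | zero =>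
      intro k hk p q
      rw [if_neg (by omega), hx0]
      exact covFn_indep (hcomp hx₀L2 p) (hηp k hk q) (hx0indep k hk p q)
    | succ s ih =>
      intro k hk p q
      have hfun : (fun ω => x (s + 1) ω p)
          = fun ω => (u (s + 1) p + ∑ r, A p r * x s ω r) + ∑ r, β p r * η (s + 1) ω r := by
        ext ω
        rw [hxrec s ω]
        simp [Matrix.mulVec, dotProduct]
      have hS1 : MemLp (fun ω => ∑ r, A p r * x s ω r) 2 ℙ :=
        memLp_finset_sum _ fun r _ => (hxL2 s r).const_mul _
      have hS2 : MemLp (fun ω => ∑ r, β p r * η (s + 1) ω r) 2 ℙ :=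
        memLp_finset_sum _ fun r _ => (hηp (s + 1) (by omega) r).const_mul _
      have hg := hηp k hk q
      have hA : MemLp (fun ω => u (s + 1) p + ∑ r, A p r * x s ω r) 2 ℙ :=
        (memLp_const (u (s + 1) p)).add hS1
      have r1 := covFn_add_left (f₁ := fun ω => u (s + 1) p + ∑ r, A p r * x s ω r)
        (f₂ := fun ω => ∑ r, β p r * η (s + 1) ω r) hA hS2 hg
      have r2 := covFn_const_add_left (g := fun ω => η k ω q) (u (s + 1) p)
        (f := fun ω => ∑ r, A p r * x s ω r) hS1
      have r3 := covFn_sum_left (g := fun ω => η k ω q) Finset.univ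
        (fun r ω => A p r * x s ω r) (fun r _ => (hxL2 s r).const_mul _) hg
      have r4 := covFn_sum_left (g := fun ω => η k ω q) Finset.univ
        (fun r ω => β p r * η (s + 1) ω r)
        (fun r _ => (hηp (s + 1) (by omega) r).const_mul _) hg
      beta_reduce at r1 r2 r3 r4
      rw [hfun, r1, r2, r3, r4]
      have e1 : (∑ r, covFn (fun ω => A p r * x s ω r) (fun ω => η k ω q))
          = ∑ r, A p r * (if k ≤ s then (A ^ (s - k) * β) r q else 0) :=
        Finset.sum_congr rfl fun r _ => by
          rw [covFn_const_mul_left _ (hxL2 s r) hg, ih k hk r q]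
      have e2 : (∑ r, covFn (fun ω => β p r * η (s + 1) ω r) (fun ω => η k ω q))
          = ∑ r, β p r * (if k = s + 1 then (if r = q then 1 else 0) else 0) :=
        Finset.sum_congr rfl fun r _ => by
          rw [covFn_const_mul_left _ (hηp (s + 1) (by omega) r) hg]
          congr 1
          by_cases hks : k = s + 1
          · subst hks
            rw [if_pos rfl]
            exact hηcov' (s + 1) (by omega) r q
          · rw [if_neg hks]
            exact covFn_indep (hηp (s + 1) (by omega) r) (hηp k hk q)
              (hηindep (s + 1) k (by omega) hk (fun hh => hks hh.symm) r q)
      rw [e1, e2]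
      rcases lt_trichotomy k (s + 1) with hlt | heq | hgt
      · have hks : k ≤ s := by omega
        simp only [if_pos hks, if_pos (show k ≤ s + 1 by omega),
          if_neg (show ¬ k = s + 1 by omega), mul_zero, Finset.sum_const_zero, add_zero]
        have hp : s + 1 - k = (s - k) + 1 := by omega
        rw [hp, pow_succ', mul_assoc, Matrix.mul_apply]
      · simp only [if_pos (show k ≤ s + 1 by omega), if_neg (show ¬ k ≤ s by omega),
          if_pos heq, mul_zero, Finset.sum_const_zero, zero_add]
        rw [show s + 1 - k = 0 by omega, pow_zero, one_mul]
        simp [mul_ite, mul_one, mul_zero, Finset.sum_ite_eq']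
      · simp only [if_neg (show ¬ k ≤ s + 1 by omega), if_neg (show ¬ k ≤ s by omega),
          if_neg (show ¬ k = s + 1 by omega), mul_zero, Finset.sum_const_zero, add_zero]
  -- main computation, entrywise
  ext i j
  show covFn (fun ω => (∑ l ∈ Finset.Icc 1 t, M l *ᵥ x (l - 1) ω) i)
      (fun ω => (∑ k ∈ Finset.Icc 1 (t - h), N k *ᵥ η k ω) j)
    = (∑ k ∈ Finset.Icc 1 (t - h),
        (∑ l ∈ Finset.Icc (k + 1) t, M l * A ^ (l - 1 - k) * β) * (N k)ᵀ) i j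
  have hFi : (fun ω => (∑ l ∈ Finset.Icc 1 t, M l *ᵥ x (l - 1) ω) i)
      = fun ω => ∑ lp ∈ Finset.Icc 1 t ×ˢ (Finset.univ : Finset (Fin n)),
          M lp.1 i lp.2 * x (lp.1 - 1) ω lp.2 := by
    ext ω
    rw [Finset.sum_product]
    simp [Matrix.mulVec, dotProduct, Finset.sum_apply]
  have hGj : (fun ω => (∑ k ∈ Finset.Icc 1 (t - h), N k *ᵥ η k ω) j)
      = fun ω => ∑ kq ∈ Finset.Icc 1 (t - h) ×ˢ (Finset.univ : Finset (Fin n)),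
          N kq.1 j kq.2 * η kq.1 ω kq.2 := by
    ext ω
    rw [Finset.sum_product]
    simp [Matrix.mulVec, dotProduct, Finset.sum_apply]
  have main := covFn_sum_mul_sum_mul
    (Finset.Icc 1 t ×ˢ (Finset.univ : Finset (Fin n)))
    (Finset.Icc 1 (t - h) ×ˢ (Finset.univ : Finset (Fin n)))
    (fun lp => M lp.1 i lp.2) (fun lp ω => x (lp.1 - 1) ω lp.2)
    (fun kq => N kq.1 j kq.2) (fun kq ω => η kq.1 ω kq.2)
    (fun lp _ => hxL2 (lp.1 - 1) lp.2)
    (fun kq hkq => hηp kq.1 (Finset.mem_Icc.mp (Finset.mem_product.mp hkq).1).1 kq.2)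
  rw [hFi, hGj]
  refine main.trans ?_
  -- now pure finite sum algebra
  have step1 : (∑ lp ∈ Finset.Icc 1 t ×ˢ (Finset.univ : Finset (Fin n)),
        ∑ kq ∈ Finset.Icc 1 (t - h) ×ˢ (Finset.univ : Finset (Fin n)),
          M lp.1 i lp.2 * N kq.1 j kq.2 *
            covFn (fun ω => x (lp.1 - 1) ω lp.2) (fun ω => η kq.1 ω kq.2))
      = ∑ kq ∈ Finset.Icc 1 (t - h) ×ˢ (Finset.univ : Finset (Fin n)),
        ∑ lp ∈ Finset.Icc 1 t ×ˢ (Finset.univ : Finset (Fin n)),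
          (if kq.1 ≤ lp.1 - 1 then
            M lp.1 i lp.2 * N kq.1 j kq.2 * (A ^ (lp.1 - 1 - kq.1) * β) lp.2 kq.2 else 0) := by
    rw [Finset.sum_comm]
    refine Finset.sum_congr rfl fun kq hkq => Finset.sum_congr rfl fun lp hlp => ?_
    have hk1 : 1 ≤ kq.1 := (Finset.mem_Icc.mp (Finset.mem_product.mp hkq).1).1
    rw [key (lp.1 - 1) kq.1 hk1 lp.2 kq.2]
    by_cases hc : kq.1 ≤ lp.1 - 1
    · rw [if_pos hc, if_pos hc]
    · rw [if_neg hc, if_neg hc, mul_zero]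
  refine step1.trans ?_
  simp only [Finset.sum_product, Matrix.sum_apply]
  refine Finset.sum_congr rfl fun k hk => ?_
  rw [Finset.sum_comm]
  simp only [Finset.sum_ite_irrel, Finset.sum_const_zero]
  have hcondeq : ∀ l ∈ Finset.Icc 1 t,
      (if k ≤ l - 1 then
          ∑ q, ∑ p, M l i p * N k j q * (A ^ (l - 1 - k) * β) p q else 0)
        = if l ∈ Finset.Icc (k + 1) t then
          ∑ q, ∑ p, M l i p * N k j q * (A ^ (l - 1 - k) * β) p q else 0 := by
    intro l hl
    rw [Finset.mem_Icc] at hl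
    refine if_congr ?_ rfl rfl
    rw [Finset.mem_Icc]
    omega
  rw [Finset.sum_congr rfl hcondeq, Finset.sum_ite_mem]
  have hfil : Finset.Icc 1 t ∩ Finset.Icc (k + 1) t = Finset.Icc (k + 1) t := by
    ext l
    simp only [Finset.mem_inter, Finset.mem_Icc]
    omega
  rw [hfil, Matrix.mul_apply]
  simp only [Matrix.transpose_apply, Matrix.sum_apply, Finset.sum_mul]
  rw [Finset.sum_comm]
  refine Finset.sum_congr rfl fun q _ => Finset.sum_congr rfl fun l _ => ?_
  conv_rhs => rw [mul_assoc, Matrix.mul_apply, Finset.sum_mul]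
  refine Finset.sum_congr rfl fun p _ => ?_
  ring
end
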